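/- Let x0, x1, x2, x3, x4 be complex numbers, each different from 1. Define the 4×4 complex matrix M by M_{11} = (1−x0·x1)/((1−x0)(1−x1)), M_{12} = 1/(1−x1), M_{13} = M_{14} = 0; M_{21} = x1/(1−x1), M_{22} = (1−x1·x2)/((1−x1)(1−x2)), M_{23} = 1/(1−x2), M_{24} = 0; M_{31} = 0, M_{32} = x2/(1−x2), M_{33} = (1−x2·x3)/((1−x2)(1−x3)), M_{34} = 1/(1−x3); M_{41} = M_{42} = 0, M_{43} = x3/(1−x3), M_{44} = (1−x3·x4)/((1−x3)(1−x4)). Then det M = (1 − x0·x1·x2·x3·x4)/((1−x0)(1−x1)(1−x2)(1−x3)(1−x4)). -/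

import Mathlib

open Matrix

set_option maxHeartbeats 1000000 in
theorem det_tridiagonal (x0 x1 x2 x3 x4 : ℂ)
    (h0 : x0 ≠ 1) (h1 : x1 ≠ 1) (h2 : x2 ≠ 1) (h3 : x3 ≠ 1) (h4 : x4 ≠ 1) :
    (!![(1-x0*x1)/((1-x0)*(1-x1)), 1/(1-x1), 0, 0;
        x1/(1-x1), (1-x1*x2)/((1-x1)*(1-x2)), 1/(1-x2), 0;
        0, x2/(1-x2), (1-x2*x3)/((1-x2)*(1-x3)), 1/(1-x3);
        0, 0, x3/(1-x3), (1-x3*x4)/((1-x3)*(1-x4))]).det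
      = (1 - x0*x1*x2*x3*x4)/((1-x0)*(1-x1)*(1-x2)*(1-x3)*(1-x4)) := by
  have h0' : (1-x0) ≠ 0 := sub_ne_zero.mpr (fun h => h0 h.symm)
  have h1' : (1-x1) ≠ 0 := sub_ne_zero.mpr (fun h => h1 h.symm)
  have h2' : (1-x2) ≠ 0 := sub_ne_zero.mpr (fun h => h2 h.symm)
  have h3' : (1-x3) ≠ 0 := sub_ne_zero.mpr (fun h => h3 h.symm)
  have h4' : (1-x4) ≠ 0 := sub_ne_zero.mpr (fun h => h4 h.symm)
  have key : ∀ a b c d e f g s t : ℂ,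
      (!![a, e, 0, 0; f, b, g, 0; 0, s, c, t; 0, 0, x3/(1-x3), d]).det
      = a * (b * (c*d - t*(x3/(1-x3))) - g*(s*d))
        - e * (f * (c*d - t*(x3/(1-x3)))) := by
    intro a b c d e f g s t
    simp [Matrix.det_succ_row_zero, Fin.sum_univ_succ, Fin.succAbove]
    ring
  rw [key]
  have e2 : (1-x2*x3)/((1-x2)*(1-x3)) * ((1-x3*x4)/((1-x3)*(1-x4)))
        - (1/(1-x3))*(x3/(1-x3))
      = (1-x2*x3*x4)/((1-x2)*(1-x3)*(1-x4)) := by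
    have A : (1-x2)*(1-x3)*((1-x3)*(1-x4)) ≠ 0 := by apply_rules [mul_ne_zero]
    have B : (1-x3)*(1-x3) ≠ 0 := by apply_rules [mul_ne_zero]
    have C : (1-x2)*(1-x3)*(1-x4) ≠ 0 := by apply_rules [mul_ne_zero]
    simp only [div_mul_div_comm, one_div, inv_mul_eq_div, div_div]
    rw [div_sub_div _ _ A B, div_eq_div_iff (mul_ne_zero A B) C]
    ring
  have e3 : (1-x1*x2)/((1-x1)*(1-x2)) * ((1-x2*x3*x4)/((1-x2)*(1-x3)*(1-x4)))
        - (1/(1-x2))*((x2/(1-x2))*((1-x3*x4)/((1-x3)*(1-x4))))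
      = (1-x1*x2*x3*x4)/((1-x1)*(1-x2)*(1-x3)*(1-x4)) := by
    have A : (1-x1)*(1-x2)*((1-x2)*(1-x3)*(1-x4)) ≠ 0 := by apply_rules [mul_ne_zero]
    have B : (1-x2)*((1-x3)*(1-x4))*(1-x2) ≠ 0 := by apply_rules [mul_ne_zero]
    have C : (1-x1)*(1-x2)*(1-x3)*(1-x4) ≠ 0 := by apply_rules [mul_ne_zero]
    simp only [div_mul_div_comm, one_div, inv_mul_eq_div, div_div]
    rw [div_sub_div _ _ A B, div_eq_div_iff (mul_ne_zero A B) C]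
    ring
  have e4 : (1-x0*x1)/((1-x0)*(1-x1)) * ((1-x1*x2*x3*x4)/((1-x1)*(1-x2)*(1-x3)*(1-x4)))
        - (1/(1-x1))*((x1/(1-x1))*((1-x2*x3*x4)/((1-x2)*(1-x3)*(1-x4))))
      = (1-x0*x1*x2*x3*x4)/((1-x0)*(1-x1)*(1-x2)*(1-x3)*(1-x4)) := by
    have A : (1-x0)*(1-x1)*((1-x1)*(1-x2)*(1-x3)*(1-x4)) ≠ 0 := by apply_rules [mul_ne_zero]
    have B : (1-x1)*((1-x2)*(1-x3)*(1-x4))*(1-x1) ≠ 0 := by apply_rules [mul_ne_zero]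
    have C : (1-x0)*(1-x1)*(1-x2)*(1-x3)*(1-x4) ≠ 0 := by apply_rules [mul_ne_zero]
    simp only [div_mul_div_comm, one_div, inv_mul_eq_div, div_div]
    rw [div_sub_div _ _ A B, div_eq_div_iff (mul_ne_zero A B) C]
    ring
  calc (1-x0*x1)/((1-x0)*(1-x1)) * ((1-x1*x2)/((1-x1)*(1-x2)) * ((1-x2*x3)/((1-x2)*(1-x3)) * ((1-x3*x4)/((1-x3)*(1-x4))) - (1/(1-x3))*(x3/(1-x3))) - (1/(1-x2))*((x2/(1-x2))*((1-x3*x4)/((1-x3)*(1-x4)))))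
        - (1/(1-x1)) * ((x1/(1-x1)) * ((1-x2*x3)/((1-x2)*(1-x3)) * ((1-x3*x4)/((1-x3)*(1-x4))) - (1/(1-x3))*(x3/(1-x3))))
      = (1-x0*x1)/((1-x0)*(1-x1)) * ((1-x1*x2*x3*x4)/((1-x1)*(1-x2)*(1-x3)*(1-x4)))
        - (1/(1-x1))*((x1/(1-x1))*((1-x2*x3*x4)/((1-x2)*(1-x3)*(1-x4)))) := by
        rw [e2, e3]
    _ = (1 - x0*x1*x2*x3*x4)/((1-x0)*(1-x1)*(1-x2)*(1-x3)*(1-x4)) := e4
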